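/- Let Y be a finite label set, f : ℝ^d → Y measurable, σ > 0, and p₀ ∈ (0,1). If x ∈ ℝ^d and y ∈ Y satisfy 0 < p_{f,σ}(x, y) < p₀, then for every δ ∈ ℝ^d with ‖δ‖ < σ·(Φ⁻¹(p₀) − Φ⁻¹(p_{f,σ}(x, y))), one has p_{f,σ}(x + δ, y) < p₀. -/

import Mathlib

open MeasureTheory ProbabilityTheory

/-- The standard Gaussian CDF `Φ`. -/
noncomputable def stdGaussianCDF (a : ℝ) : ℝ :=
  ((gaussianReal 0 1) (Set.Iic a)).toReal

/-- The inverse `Φ⁻¹` of the standard Gaussian CDF (on `(0,1)`). -/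
noncomputable def stdGaussianCDFInv (p : ℝ) : ℝ :=
  sSup {a : ℝ | stdGaussianCDF a ≤ p}

/-- The Gaussian measure `N(0, σ²I)` on `ℝ^d` (with the Euclidean norm), obtained as the
`d`-fold product of the real Gaussian measure with mean `0` and variance `σ²`. -/
noncomputable def gaussianE (d : ℕ) (σ : ℝ) : Measure (EuclideanSpace ℝ (Fin d)) :=
  (Measure.pi fun _ : Fin d => gaussianReal 0 ⟨σ ^ 2, sq_nonneg σ⟩).map
    (MeasurableEquiv.toLp 2 (Fin d → ℝ))

/-- The smoothed confidence `p_{f,σ}(x, y) = N(0, σ²I)({δ : f(x + δ) = y})`. -/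
noncomputable def smoothedConf {d : ℕ} {Y : Type*} (f : EuclideanSpace ℝ (Fin d) → Y)
    (σ : ℝ) (x : EuclideanSpace ℝ (Fin d)) (y : Y) : ℝ :=
  (gaussianE d σ {δ | f (x + δ) = y}).toReal

open Set
open scoped NNReal ENNReal


lemma gaussianReal_singleton (m a : ℝ) {v : ℝ≥0} (hv : v ≠ 0) : gaussianReal m v {a} = 0 :=
  gaussianReal_absolutelyContinuous m hv Real.volume_singleton

lemma gaussianReal_pos_of_ne (m : ℝ) {v : ℝ≥0} (hv : v ≠ 0) {s : Set ℝ}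
    (hs : volume s ≠ 0) : 0 < gaussianReal m v s := by
  refine pos_iff_ne_zero.mpr fun h => hs ?_
  exact gaussianReal_absolutelyContinuous' m hv h

lemma stdGaussianCDF_nonneg (a : ℝ) : 0 ≤ stdGaussianCDF a := ENNReal.toReal_nonneg

private lemma Iic_split {a b : ℝ} (hab : a ≤ b) :
    gaussianReal 0 1 (Set.Iic b) = gaussianReal 0 1 (Set.Iic a) + gaussianReal 0 1 (Set.Ioc a b) := by
  have hu : Set.Iic a ∪ Set.Ioc a b = Set.Iic b := Set.Iic_union_Ioc_eq_Iic hab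
  have hd : Disjoint (Set.Iic a) (Set.Ioc a b) := by
    simp only [Set.disjoint_left, Set.mem_Iic, Set.mem_Ioc, not_and, not_le]
    intro x hx h'; linarith
  rw [← hu, measure_union hd measurableSet_Ioc]

lemma stdGaussianCDF_strictMono : StrictMono stdGaussianCDF := by
  intro a b hab
  have hpos : 0 < gaussianReal 0 1 (Set.Ioc a b) := by
    refine gaussianReal_pos_of_ne 0 one_ne_zero ?_
    simp [Real.volume_Ioc, hab, ENNReal.ofReal_pos, sub_pos]
  unfold stdGaussianCDF
  rw [Iic_split hab.le, ENNReal.toReal_add (measure_ne_top _ _) (measure_ne_top _ _)]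
  have : 0 < (gaussianReal 0 1 (Set.Ioc a b)).toReal :=
    ENNReal.toReal_pos hpos.ne' (measure_ne_top _ _)
  linarith

lemma stdGaussianCDF_mono : Monotone stdGaussianCDF := stdGaussianCDF_strictMono.monotone

lemma gaussianPDFReal_std_le (x : ℝ) :
    gaussianPDFReal 0 1 x ≤ (Real.sqrt (2 * Real.pi))⁻¹ := by
  unfold gaussianPDFReal
  have h1 : Real.exp (-(x - 0) ^ 2 / (2 * (1:ℝ≥0))) ≤ 1 := by
    rw [Real.exp_le_one_iff]
    have : (0:ℝ) ≤ (x - 0)^2 := sq_nonneg _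
    have h2 : (0:ℝ) < 2 * (1:ℝ≥0) := by norm_num
    apply div_nonpos_of_nonpos_of_nonneg <;> [linarith; linarith]
  calc (Real.sqrt (2 * Real.pi * 1))⁻¹ * Real.exp (-(x - 0) ^ 2 / (2 * (1:ℝ≥0)))
      ≤ (Real.sqrt (2 * Real.pi * 1))⁻¹ * 1 := by
        apply mul_le_mul_of_nonneg_left h1; positivity
    _ = (Real.sqrt (2 * Real.pi))⁻¹ := by rw [mul_one, mul_one]

lemma stdGaussianCDF_lipschitz {a b : ℝ} (hab : a ≤ b) :
    stdGaussianCDF b - stdGaussianCDF a ≤ (Real.sqrt (2 * Real.pi))⁻¹ * (b - a) := by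
  unfold stdGaussianCDF
  rw [Iic_split hab, ENNReal.toReal_add (measure_ne_top _ _) (measure_ne_top _ _)]
  have key : (gaussianReal 0 1 (Set.Ioc a b)).toReal ≤ (Real.sqrt (2 * Real.pi))⁻¹ * (b - a) := by
    rw [gaussianReal_apply_eq_integral 0 one_ne_zero, ENNReal.toReal_ofReal
      (setIntegral_nonneg measurableSet_Ioc fun x _ => gaussianPDFReal_nonneg 0 1 x)]
    calc ∫ x in Set.Ioc a b, gaussianPDFReal 0 1 x
        ≤ ∫ _x in Set.Ioc a b, (Real.sqrt (2 * Real.pi))⁻¹ := by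
          apply setIntegral_mono_on ((integrable_gaussianPDFReal 0 1).restrict)
            (integrableOn_const (by simp [Real.volume_Ioc]))
            measurableSet_Ioc
          intro x _; exact gaussianPDFReal_std_le x
      _ = (Real.sqrt (2 * Real.pi))⁻¹ * (b - a) := by
          rw [setIntegral_const, smul_eq_mul, Real.volume_real_Ioc_of_le hab,
            mul_comm]
  linarith

lemma stdGaussianCDF_continuous : Continuous stdGaussianCDF := by
  rw [Metric.continuous_iff]
  intro x ε hε
  have hMpos : (0:ℝ) < (Real.sqrt (2 * Real.pi))⁻¹ := by positivity
  refine ⟨ε / (Real.sqrt (2 * Real.pi))⁻¹, by positivity, fun y hy => ?_⟩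
  rw [Real.dist_eq] at hy ⊢
  obtain ⟨hy1, hy2⟩ := abs_lt.mp hy
  rcases le_total x y with h | h
  · have h1 := stdGaussianCDF_lipschitz h
    have h2 := stdGaussianCDF_mono h
    have h4 : (Real.sqrt (2 * Real.pi))⁻¹ * (y - x) < ε := by
      rw [mul_comm]; exact (lt_div_iff₀ hMpos).mp (by linarith)
    rw [abs_of_nonneg (by linarith)]; linarith
  · have h1 := stdGaussianCDF_lipschitz h
    have h2 := stdGaussianCDF_mono h
    have h4 : (Real.sqrt (2 * Real.pi))⁻¹ * (x - y) < ε := by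
      rw [mul_comm]; exact (lt_div_iff₀ hMpos).mp (by linarith)
    rw [abs_of_nonpos (by linarith), neg_sub]; linarith

lemma gaussianReal_map_neg : (gaussianReal 0 1).map (fun x => -x) = gaussianReal 0 1 := by
  have h := gaussianReal_map_const_mul (μ := 0) (v := 1) (-1)
  have h2 : (fun x : ℝ => -x) = (fun x : ℝ => (-1) * x) := by funext x; ring
  have h3 : (NNReal.mk ((-1:ℝ)^2) (sq_nonneg _) * 1 : ℝ≥0) = 1 := by
    rw [mul_one]; apply NNReal.eq; show ((-1:ℝ)^2) = 1; norm_num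
  rw [h2, h, h3, neg_mul, one_mul, neg_zero]

lemma stdGaussianCDF_neg (a : ℝ) : stdGaussianCDF (-a) = 1 - stdGaussianCDF a := by
  have h1 : gaussianReal 0 1 (Set.Iic (-a)) = gaussianReal 0 1 (Set.Ici a) := by
    conv_rhs => rw [← _root_.gaussianReal_map_neg]
    rw [Measure.map_apply measurable_neg measurableSet_Ici]
    congr 1
    ext x
    simp
  have h2 : gaussianReal 0 1 (Set.Ici a) = 1 - gaussianReal 0 1 (Set.Iio a) := by
    rw [← Set.compl_Iio, prob_compl_eq_one_sub measurableSet_Iio]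
  have h3 : gaussianReal 0 1 (Set.Iio a) = gaussianReal 0 1 (Set.Iic a) :=
    measure_congr (Iio_ae_eq_Iic' (gaussianReal_singleton 0 a one_ne_zero))
  unfold stdGaussianCDF
  rw [h1, h2, h3, ENNReal.toReal_sub_of_le prob_le_one ENNReal.one_ne_top, ENNReal.toReal_one]

lemma stdGaussianCDF_tendsto_atTop : Filter.Tendsto stdGaussianCDF Filter.atTop (nhds 1) := by
  have h := tendsto_measure_Iic_atTop (gaussianReal 0 1)
  rw [measure_univ] at h
  have := (ENNReal.tendsto_toReal ENNReal.one_ne_top).comp h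
  exact this

lemma stdGaussianCDF_tendsto_atBot : Filter.Tendsto stdGaussianCDF Filter.atBot (nhds 0) := by
  have key : ∀ x : ℝ, stdGaussianCDF x = 1 - stdGaussianCDF (-x) := by
    intro x; have := stdGaussianCDF_neg (-x); rw [neg_neg] at this; linarith
  rw [show stdGaussianCDF = fun x => 1 - stdGaussianCDF (-x) from funext key]
  have h1 : Filter.Tendsto (fun x : ℝ => stdGaussianCDF (-x)) Filter.atBot (nhds 1) :=
    stdGaussianCDF_tendsto_atTop.comp Filter.tendsto_neg_atBot_atTop
  have := Filter.Tendsto.const_sub (1:ℝ) h1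
  simpa using this

lemma exists_stdGaussianCDF_eq {p : ℝ} (hp : p ∈ Set.Ioo (0:ℝ) 1) :
    ∃ a, stdGaussianCDF a = p := by
  obtain ⟨b, hb⟩ := (stdGaussianCDF_tendsto_atTop.eventually (eventually_gt_nhds hp.2)).exists
  obtain ⟨a, ha⟩ := (stdGaussianCDF_tendsto_atBot.eventually (eventually_lt_nhds hp.1)).exists
  have hab : a ≤ b := by
    by_contra hc
    exact absurd (stdGaussianCDF_mono (le_of_not_ge hc)) (by linarith)
  obtain ⟨c, _, hc⟩ := intermediate_value_Icc hab stdGaussianCDF_continuous.continuousOn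
    (Set.mem_Icc.mpr ⟨ha.le, hb.le⟩)
  exact ⟨c, hc⟩

lemma stdGaussianCDF_stdGaussianCDFInv {p : ℝ} (hp : p ∈ Set.Ioo (0:ℝ) 1) :
    stdGaussianCDF (stdGaussianCDFInv p) = p := by
  obtain ⟨c, hc⟩ := exists_stdGaussianCDF_eq hp
  have hset : {a : ℝ | stdGaussianCDF a ≤ p} = Set.Iic c := by
    ext a
    simp only [Set.mem_setOf_eq, Set.mem_Iic, ← hc]
    exact stdGaussianCDF_strictMono.le_iff_le
  unfold stdGaussianCDFInv
  rw [hset, csSup_Iic, hc]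

lemma lintegral_pi_prod {n : ℕ} (μ : Fin n → Measure ℝ) [∀ i, SigmaFinite (μ i)]
    (f : Fin n → ℝ → ℝ≥0∞) (hf : ∀ i, Measurable (f i)) :
    ∫⁻ x : Fin n → ℝ, ∏ i, f i (x i) ∂Measure.pi μ = ∏ i, ∫⁻ t, f i t ∂μ i := by
  induction n with
  | zero => simp [lintegral_const]
  | succ n ih =>
    have hmp := (measurePreserving_piFinSuccAbove (fun i => μ i) 0).symm
    rw [← hmp.lintegral_comp (f := fun x => ∏ i, f i (x i))
      (Finset.measurable_prod Finset.univ fun i _ => (hf i).comp (measurable_pi_apply i))]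
    have heq : ∀ y : ℝ × (Fin n → ℝ),
        (∏ i, f i (((MeasurableEquiv.piFinSuccAbove (fun _ : Fin (n+1) => ℝ) 0).symm y) i))
        = f 0 y.1 * ∏ j : Fin n, f j.succ (y.2 j) := by
      intro y
      rw [Fin.prod_univ_succ]
      simp [MeasurableEquiv.piFinSuccAbove_symm_apply, Fin.insertNthEquiv, Fin.insertNth_zero,
        Fin.zero_succAbove]
    simp_rw [heq, Fin.zero_succAbove]
    rw [lintegral_prod_mul (f := f 0) (g := fun w : Fin n → ℝ => ∏ j, f j.succ (w j))
      ((hf 0).aemeasurable)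
      ((show Measurable fun w : Fin n → ℝ => ∏ j, f j.succ (w j) from
        Finset.measurable_prod Finset.univ fun (j : Fin n) _ =>
        (hf j.succ).comp (measurable_pi_apply j)).aemeasurable)]
    rw [ih (fun j => μ j.succ) (fun j => f j.succ) (fun j => hf j.succ), Fin.prod_univ_succ]

lemma pi_withDensity {n : ℕ} (μ : Fin n → Measure ℝ) [∀ i, SigmaFinite (μ i)]
    (f : Fin n → ℝ → ℝ≥0∞) (hf : ∀ i, Measurable (f i))
    (ν : Fin n → Measure ℝ) [∀ i, SigmaFinite (ν i)]
    (hν : ∀ i, ν i = (μ i).withDensity (f i)) :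
    Measure.pi ν = (Measure.pi μ).withDensity (fun x => ∏ i, f i (x i)) := by
  refine Measure.pi_eq fun s hs => ?_
  rw [withDensity_apply _ (MeasurableSet.univ_pi hs), ← lintegral_indicator (MeasurableSet.univ_pi hs)]
  have heq : ∀ x : Fin n → ℝ,
      (Set.univ.pi s).indicator (fun x => ∏ i, f i (x i)) x
        = ∏ i, (s i).indicator (f i) (x i) := by
    intro x
    by_cases hx : x ∈ Set.univ.pi s
    · rw [Set.indicator_of_mem hx]
      exact Finset.prod_congr rfl fun i _ =>
        (Set.indicator_of_mem (hx i (Set.mem_univ i)) _).symm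
    · rw [Set.indicator_of_notMem hx]
      simp only [Set.mem_pi, Set.mem_univ, forall_true_left, not_forall] at hx
      obtain ⟨i, hi⟩ := hx
      exact (Finset.prod_eq_zero (Finset.mem_univ i)
        (Set.indicator_of_notMem hi _)).symm
  simp_rw [heq]
  rw [lintegral_pi_prod μ _ (fun i => (hf i).indicator (hs i))]
  exact Finset.prod_congr rfl fun i _ => by
    rw [lintegral_indicator (hs i), hν i, withDensity_apply _ (hs i)]

lemma map_withDensity_equiv {α β : Type*} [MeasurableSpace α] [MeasurableSpace β]
    (μ : Measure α) (e : α ≃ᵐ β) (g : β → ℝ≥0∞) (hg : Measurable g) :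
    (μ.withDensity (g ∘ e)).map e = (μ.map e).withDensity g := by
  ext s hs
  rw [Measure.map_apply e.measurable hs, withDensity_apply _ hs,
    withDensity_apply _ (e.measurable hs), setLIntegral_map hs hg e.measurable]
  rfl

section Euclidean

variable {d : ℕ}

noncomputable def rhoE (d : ℕ) (σ : ℝ) (z : EuclideanSpace ℝ (Fin d)) : ℝ≥0∞ :=
  ENNReal.ofReal (∏ i, gaussianPDFReal 0 ⟨σ ^ 2, sq_nonneg σ⟩ (z i))

lemma measurable_eval_euclidean (i : Fin d) :
    Measurable (fun z : EuclideanSpace ℝ (Fin d) => z i) :=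
  (measurable_pi_apply i).comp (WithLp.measurable_ofLp _ _)

lemma rhoE_measurable (σ : ℝ) : Measurable (rhoE d σ) := by
  apply Measurable.ennreal_ofReal
  exact Finset.measurable_prod Finset.univ fun i _ =>
    (measurable_gaussianPDFReal 0 _).comp (measurable_eval_euclidean i)

instance gaussianE_probability (d : ℕ) (σ : ℝ) : IsProbabilityMeasure (gaussianE d σ) := by
  unfold gaussianE
  haveI : ∀ i : Fin d, IsProbabilityMeasure (gaussianReal 0 ⟨σ ^ 2, sq_nonneg σ⟩) :=
    fun _ => instIsProbabilityMeasureGaussianReal 0 _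
  exact Measure.isProbabilityMeasure_map (MeasurableEquiv.measurable _).aemeasurable

lemma gaussianE_eq_withDensity {σ : ℝ} (hσ : σ ≠ 0) :
    gaussianE d σ = volume.withDensity (rhoE d σ) := by
  have hV : (⟨σ ^ 2, sq_nonneg σ⟩ : ℝ≥0) ≠ 0 := by
    simp only [ne_eq, ← NNReal.coe_eq_zero]
    simpa using pow_ne_zero 2 hσ
  unfold gaussianE
  haveI : ∀ i : Fin d, IsProbabilityMeasure (gaussianReal 0 ⟨σ ^ 2, sq_nonneg σ⟩) :=
    fun _ => instIsProbabilityMeasureGaussianReal 0 _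
  rw [pi_withDensity (n := d) (fun _ => volume) (fun _ => gaussianPDF 0 ⟨σ ^ 2, sq_nonneg σ⟩)
      (fun _ => measurable_gaussianPDF 0 _) (fun _ => gaussianReal 0 ⟨σ ^ 2, sq_nonneg σ⟩)
      (fun _ => gaussianReal_of_var_ne_zero 0 hV), ← volume_pi]
  have hcomp : (fun x : Fin d → ℝ => ∏ i, gaussianPDF 0 ⟨σ ^ 2, sq_nonneg σ⟩ (x i))
      = (rhoE d σ) ∘ (MeasurableEquiv.toLp 2 (Fin d → ℝ)) := by
    funext x
    show _ = rhoE d σ ((MeasurableEquiv.toLp 2 (Fin d → ℝ)) x)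
    unfold rhoE
    exact (ENNReal.ofReal_prod_of_nonneg (fun i _ => gaussianPDFReal_nonneg _ _ _)).symm
  rw [hcomp, map_withDensity_equiv volume _ (rhoE d σ) (rhoE_measurable σ),
    MeasurableEquiv.coe_toLp, (PiLp.volume_preserving_toLp (Fin d)).map_eq]

lemma rhoE_eq_norm {σ : ℝ} (hσ : 0 < σ) (z : EuclideanSpace ℝ (Fin d)) :
    rhoE d σ z = ENNReal.ofReal
      (((Real.sqrt (2 * Real.pi * σ ^ 2))⁻¹) ^ d * Real.exp (-‖z‖ ^ 2 / (2 * σ ^ 2))) := by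
  unfold rhoE
  congr 1
  have hnorm : ‖z‖ ^ 2 = ∑ i, (z i) ^ 2 := by
    rw [EuclideanSpace.norm_eq, Real.sq_sqrt (Finset.sum_nonneg fun i _ => sq_nonneg _)]
    congr 1
    funext i
    rw [Real.norm_eq_abs, sq_abs]
  unfold gaussianPDFReal
  push_cast
  simp_rw [sub_zero]
  rw [Finset.prod_mul_distrib, Finset.prod_const, Finset.card_univ, Fintype.card_fin,
    ← Real.exp_sum]
  congr 1
  rw [hnorm, neg_div, ← Finset.sum_div, Finset.sum_neg_distrib, neg_div]
  rfl

lemma rhoE_congr_norm {σ : ℝ} (hσ : 0 < σ) {z w : EuclideanSpace ℝ (Fin d)}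
    (h : ‖z‖ = ‖w‖) : rhoE d σ z = rhoE d σ w := by
  rw [rhoE_eq_norm hσ, rhoE_eq_norm hσ, h]

end Euclidean

section Rotation

variable {d : ℕ}

lemma gaussianE_map_repr {σ : ℝ} (hσ : 0 < σ)
    (b : OrthonormalBasis (Fin d) ℝ (EuclideanSpace ℝ (Fin d))) :
    (gaussianE d σ).map b.repr = gaussianE d σ := by
  rw [gaussianE_eq_withDensity hσ.ne']
  set e : EuclideanSpace ℝ (Fin d) ≃ᵐ EuclideanSpace ℝ (Fin d) :=
    b.repr.toHomeomorph.toMeasurableEquiv with he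
  have hcoe : (⇑b.repr : EuclideanSpace ℝ (Fin d) → EuclideanSpace ℝ (Fin d)) = ⇑e := rfl
  have hrho : rhoE d σ = (rhoE d σ) ∘ e := by
    funext z
    exact (rhoE_congr_norm hσ (by simp [he, b.repr.norm_map])).symm
  rw [hcoe]
  conv_lhs => rw [hrho]
  rw [map_withDensity_equiv volume e (rhoE d σ) (rhoE_measurable σ)]
  congr 1
  rw [← hcoe]
  exact b.measurePreserving_repr.map_eq

lemma gaussianE_map_eval (σ : ℝ) (i₀ : Fin d) :
    (gaussianE d σ).map (fun z => z i₀) = gaussianReal 0 ⟨σ ^ 2, sq_nonneg σ⟩ := by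
  unfold gaussianE
  haveI : ∀ i : Fin d, IsProbabilityMeasure (gaussianReal 0 ⟨σ ^ 2, sq_nonneg σ⟩) :=
    fun _ => instIsProbabilityMeasureGaussianReal 0 _
  rw [Measure.map_map (measurable_eval_euclidean i₀) (MeasurableEquiv.measurable _)]
  have hcomp : ((fun z : EuclideanSpace ℝ (Fin d) => z i₀)
      ∘ (MeasurableEquiv.toLp 2 (Fin d → ℝ))) = fun x : Fin d → ℝ => x i₀ := rfl
  rw [hcomp]
  ext s hs
  rw [Measure.map_apply (measurable_pi_apply i₀) hs]
  have hpre : (fun x : Fin d → ℝ => x i₀) ⁻¹' s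
      = Set.univ.pi (Function.update (fun _ => Set.univ) i₀ s) := by
    ext x
    simp only [Set.mem_preimage, Set.mem_pi, Set.mem_univ, forall_true_left]
    constructor
    · intro hx j
      rcases eq_or_ne j i₀ with rfl | hj
      · simpa [Function.update_self] using hx
      · simp [Function.update_of_ne hj]
    · intro hx
      simpa [Function.update_self] using hx i₀
  rw [hpre, Measure.pi_pi]
  rw [Finset.prod_eq_single i₀ (fun j _ hj => by rw [Function.update_of_ne hj]; exact (this j).measure_univ)
    (fun h => absurd (Finset.mem_univ i₀) h)]
  simp [Function.update_self]

lemma gaussianE_map_inner {σ : ℝ} (hσ : 0 < σ) {u : EuclideanSpace ℝ (Fin d)}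
    (hu : ‖u‖ = 1) (hd : 0 < d) :
    (gaussianE d σ).map (fun z => (inner ℝ u z : ℝ))
      = gaussianReal 0 ⟨σ ^ 2, sq_nonneg σ⟩ := by
  set i₀ : Fin d := ⟨0, hd⟩
  have hcard : Module.finrank ℝ (EuclideanSpace ℝ (Fin d)) = Fintype.card (Fin d) := by
    simp [finrank_euclideanSpace]
  have horth : Orthonormal ℝ (Set.restrict {i₀} (fun _ : Fin d => u)) := by
    constructor
    · intro i; exact hu
    · intro i j hij
      exact absurd (Subsingleton.elim i j) hij
  obtain ⟨b, hb⟩ := Orthonormal.exists_orthonormalBasis_extension_of_card_eq hcard horth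
  have hbu : b i₀ = u := hb i₀ rfl
  have hinner : (fun z : EuclideanSpace ℝ (Fin d) => (inner ℝ u z : ℝ))
      = (fun w : EuclideanSpace ℝ (Fin d) => w i₀) ∘ b.repr := by
    funext z
    simp only [Function.comp_apply]
    rw [← hbu, ← OrthonormalBasis.repr_apply_apply]
  rw [hinner, ← Measure.map_map (measurable_eval_euclidean i₀)
    (by rw [show (⇑b.repr : EuclideanSpace ℝ (Fin d) → EuclideanSpace ℝ (Fin d))
          = ⇑b.repr.toHomeomorph.toMeasurableEquiv from rfl]
        exact MeasurableEquiv.measurable _),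
    gaussianE_map_repr hσ b, gaussianE_map_eval]

end Rotation

section Shift

variable {d : ℕ}

noncomputable def gratio (σ : ℝ) (δ z : EuclideanSpace ℝ (Fin d)) : ℝ≥0∞ :=
  ENNReal.ofReal (Real.exp (((inner ℝ δ z : ℝ) - ‖δ‖ ^ 2 / 2) / σ ^ 2))

lemma gratio_measurable (σ : ℝ) (δ : EuclideanSpace ℝ (Fin d)) :
    Measurable (gratio σ δ) := by
  apply Measurable.ennreal_ofReal
  apply Measurable.comp Real.measurable_exp
  apply Measurable.div_const
  apply Measurable.sub_const
  exact (Continuous.inner continuous_const continuous_id).measurable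

lemma rhoE_sub_eq {σ : ℝ} (hσ : 0 < σ) (δ z : EuclideanSpace ℝ (Fin d)) :
    rhoE d σ (z - δ) = rhoE d σ z * gratio σ δ z := by
  rw [rhoE_eq_norm hσ, rhoE_eq_norm hσ]
  unfold gratio
  rw [← ENNReal.ofReal_mul (by positivity)]
  congr 1
  have hexp : ‖z - δ‖ ^ 2 = ‖z‖ ^ 2 - 2 * (inner ℝ δ z : ℝ) + ‖δ‖ ^ 2 := by
    rw [norm_sub_sq_real, real_inner_comm]
  have hσ2 : σ ^ 2 ≠ 0 := pow_ne_zero 2 hσ.ne'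
  have harg : -‖z - δ‖ ^ 2 / (2 * σ ^ 2)
      = -‖z‖ ^ 2 / (2 * σ ^ 2) + ((inner ℝ δ z : ℝ) - ‖δ‖ ^ 2 / 2) / σ ^ 2 := by
    rw [hexp]; field_simp; ring
  rw [harg, Real.exp_add, mul_assoc]
  ring

lemma gaussianE_map_add {σ : ℝ} (hσ : 0 < σ) (δ : EuclideanSpace ℝ (Fin d)) :
    (gaussianE d σ).map (fun z => z + δ)
      = (gaussianE d σ).withDensity (gratio σ δ) := by
  set e : EuclideanSpace ℝ (Fin d) ≃ᵐ EuclideanSpace ℝ (Fin d) :=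
    (Homeomorph.addRight δ).toMeasurableEquiv with he
  have hcoe : (fun z : EuclideanSpace ℝ (Fin d) => z + δ) = ⇑e := rfl
  rw [gaussianE_eq_withDensity hσ.ne', hcoe]
  have hrho : rhoE d σ = (fun z => rhoE d σ (z - δ)) ∘ e := by
    funext z
    show rhoE d σ z = rhoE d σ (z + δ - δ)
    rw [add_sub_cancel_right]
  conv_lhs => rw [hrho]
  rw [map_withDensity_equiv volume e (fun z => rhoE d σ (z - δ))
    ((rhoE_measurable σ).comp (measurable_sub_const δ))]
  have hvol : volume.map ⇑e = volume := by
    rw [← hcoe]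
    exact map_add_right_eq_self volume δ
  rw [hvol]
  have : (fun z => rhoE d σ (z - δ)) = fun z => rhoE d σ z * gratio σ δ z := by
    funext z; exact rhoE_sub_eq hσ δ z
  rw [this]
  rw [show (fun z => rhoE d σ z * gratio σ δ z) = (rhoE d σ) * (gratio σ δ) from rfl]
  rw [withDensity_mul volume (rhoE_measurable σ) (gratio_measurable σ δ)]

end Shift

lemma neyman_pearson {α : Type*} [MeasurableSpace α] (μ : Measure α) [IsFiniteMeasure μ]
    (r : α → ℝ≥0∞) (hr : Measurable r) {A H : Set α}
    (hA : MeasurableSet A) (hH : MeasurableSet H) (c : ℝ≥0∞)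
    (hH1 : ∀ z ∈ H, c ≤ r z) (hH2 : ∀ z ∉ H, r z ≤ c)
    (hAH : μ A = μ H) :
    μ.withDensity r A ≤ μ.withDensity r H := by
  set ν := μ.withDensity r with hν
  have hsplitA : ν A = ν (A ∩ H) + ν (A \ H) := (measure_inter_add_diff A hH).symm
  have hsplitH : ν H = ν (H ∩ A) + ν (H \ A) := (measure_inter_add_diff H hA).symm
  have hdiff_eq : μ (A \ H) = μ (H \ A) := by
    have h1 : μ (A ∩ H) + μ (A \ H) = μ A := measure_inter_add_diff A hH
    have h2 : μ (H ∩ A) + μ (H \ A) = μ H := measure_inter_add_diff H hA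
    rw [Set.inter_comm H A] at h2
    have := h1.trans (hAH.trans h2.symm)
    exact (ENNReal.add_right_inj (measure_ne_top μ _)).mp this
  have hup : ν (A \ H) ≤ c * μ (A \ H) := by
    rw [hν, withDensity_apply _ (hA.diff hH)]
    calc ∫⁻ z in A \ H, r z ∂μ ≤ ∫⁻ _z in A \ H, c ∂μ :=
          setLIntegral_mono measurable_const fun z hz => hH2 z hz.2
      _ = c * μ (A \ H) := by rw [setLIntegral_const]
  have hlow : c * μ (H \ A) ≤ ν (H \ A) := by
    rw [hν, withDensity_apply _ (hH.diff hA)]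
    calc c * μ (H \ A) = ∫⁻ _z in H \ A, c ∂μ := by rw [setLIntegral_const]
      _ ≤ ∫⁻ z in H \ A, r z ∂μ := setLIntegral_mono hr fun z hz => hH1 z hz.1
  calc ν A = ν (A ∩ H) + ν (A \ H) := hsplitA
    _ ≤ ν (A ∩ H) + c * μ (A \ H) := add_le_add_right hup _
    _ = ν (A ∩ H) + c * μ (H \ A) := by rw [hdiff_eq]
    _ ≤ ν (A ∩ H) + ν (H \ A) := add_le_add_right hlow _
    _ = ν H := by rw [Set.inter_comm A H, ← hsplitH]

lemma gaussianOne_Ici (a : ℝ) :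
    gaussianReal 0 1 (Set.Ici a) = ENNReal.ofReal (1 - stdGaussianCDF a) := by
  have h1 : gaussianReal 0 1 (Set.Iic (-a)) = gaussianReal 0 1 (Set.Ici a) := by
    conv_rhs => rw [← _root_.gaussianReal_map_neg]
    rw [Measure.map_apply measurable_neg measurableSet_Ici]
    congr 1
    ext x
    simp
  rw [← h1, ← stdGaussianCDF_neg]
  exact (ENNReal.ofReal_toReal (measure_ne_top _ _)).symm

lemma gaussianV_Ici {σ : ℝ} (hσ : 0 < σ) (t : ℝ) :
    gaussianReal 0 ⟨σ ^ 2, sq_nonneg σ⟩ (Set.Ici (σ * t))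
      = ENNReal.ofReal (1 - stdGaussianCDF t) := by
  have hmap := gaussianReal_map_const_mul (μ := 0) (v := 1) σ
  have hV : (NNReal.mk (σ ^ 2) (sq_nonneg σ) * 1 : ℝ≥0) = ⟨σ ^ 2, sq_nonneg σ⟩ := by
    rw [mul_one]; rfl
  rw [hV, mul_zero] at hmap
  rw [← hmap, Measure.map_apply (measurable_const_mul σ) measurableSet_Ici]
  have hpre : (fun x : ℝ => σ * x) ⁻¹' Set.Ici (σ * t) = Set.Ici t := by
    ext x
    simp only [Set.mem_preimage, Set.mem_Ici]
    exact mul_le_mul_iff_right₀ hσ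
  rw [hpre, gaussianOne_Ici]

/-- certified radius for staying below the threshold `p₀`. -/
theorem stmt_2 {d : ℕ} {Y : Type*} [Fintype Y] [MeasurableSpace Y] [MeasurableSingletonClass Y]
    (f : EuclideanSpace ℝ (Fin d) → Y) (hf : Measurable f)
    (σ : ℝ) (hσ : 0 < σ) (p₀ : ℝ) (hp₀ : p₀ ∈ Set.Ioo (0 : ℝ) 1)
    (x : EuclideanSpace ℝ (Fin d)) (y : Y)
    (h₁ : 0 < smoothedConf f σ x y) (h₂ : smoothedConf f σ x y < p₀)
    (δ : EuclideanSpace ℝ (Fin d))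
    (hδ : ‖δ‖ < σ * (stdGaussianCDFInv p₀ - stdGaussianCDFInv (smoothedConf f σ x y))) :
    smoothedConf f σ (x + δ) y < p₀ := by
  rcases eq_or_ne δ 0 with rfl | hδ0
  · simpa using h₂
  have hδnorm : 0 < ‖δ‖ := norm_pos_iff.mpr hδ0
  have hd : 0 < d := by
    rcases Nat.eq_zero_or_pos d with hd0 | hd
    · exfalso
      apply hδ0
      subst hd0
      exact Subsingleton.elim δ 0
    · exact hd
  set p := smoothedConf f σ x y with hp_def
  have hp_pos : 0 < p := h₁
  have hp_lt1 : p < 1 := lt_trans h₂ hp₀.2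
  set q := stdGaussianCDFInv p with hq_def
  have hq : stdGaussianCDF q = p := stdGaussianCDF_stdGaussianCDFInv ⟨hp_pos, hp_lt1⟩
  have hq0 : stdGaussianCDF (stdGaussianCDFInv p₀) = p₀ := stdGaussianCDF_stdGaussianCDFInv hp₀
  set A := {z : EuclideanSpace ℝ (Fin d) | f (x + z) = y} with hA_def
  have hA : MeasurableSet A :=
    (hf.comp (measurable_const_add x)) (measurableSet_singleton y)
  have hp_val : gaussianE d σ A = ENNReal.ofReal p := by
    rw [hp_def]
    unfold smoothedConf
    exact (ENNReal.ofReal_toReal (measure_ne_top _ _)).symm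
  set u := ‖δ‖⁻¹ • δ with hu_def
  have hu : ‖u‖ = 1 := by
    rw [hu_def, norm_smul, norm_inv, norm_norm]
    field_simp
  have hinner_cont : Continuous fun z : EuclideanSpace ℝ (Fin d) => (inner ℝ u z : ℝ) :=
    Continuous.inner continuous_const continuous_id
  have hinner_meas : Measurable fun z : EuclideanSpace ℝ (Fin d) => (inner ℝ u z : ℝ) :=
    hinner_cont.measurable
  have hinner_delta : ∀ z : EuclideanSpace ℝ (Fin d),
      (inner ℝ δ z : ℝ) = ‖δ‖ * (inner ℝ u z : ℝ) := by
    intro z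
    rw [hu_def, real_inner_smul_left]
    field_simp
  have hud : (inner ℝ u δ : ℝ) = ‖δ‖ := by
    rw [hu_def, real_inner_smul_left, real_inner_self_eq_norm_sq]
    field_simp
  set H := (fun z : EuclideanSpace ℝ (Fin d) => (inner ℝ u z : ℝ)) ⁻¹' Set.Ici (σ * (-q))
    with hH_def
  have hH : MeasurableSet H := hinner_meas measurableSet_Ici
  have hlaw0 := gaussianE_map_inner hσ hu hd
  have hμH : gaussianE d σ H = ENNReal.ofReal p := by
    rw [hH_def, ← Measure.map_apply hinner_meas measurableSet_Ici, hlaw0,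
      gaussianV_Ici hσ, stdGaussianCDF_neg, hq]
    congr 1
    ring
  set ν := (gaussianE d σ).map (fun z => z + δ) with hν_def
  have hsets : {z : EuclideanSpace ℝ (Fin d) | f (x + δ + z) = y}
      = (fun z : EuclideanSpace ℝ (Fin d) => z + δ) ⁻¹' A := by
    ext z
    simp only [Set.mem_setOf_eq, Set.mem_preimage, hA_def]
    rw [show x + δ + z = x + (z + δ) by rw [add_assoc, add_comm δ z]]
  have hνA : smoothedConf f σ (x + δ) y = (ν A).toReal := by
    unfold smoothedConf
    rw [hsets, hν_def, Measure.map_apply (measurable_add_const δ) hA]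
  have hν_dens : ν = (gaussianE d σ).withDensity (gratio σ δ) := gaussianE_map_add hσ δ
  set c : ℝ≥0∞ := ENNReal.ofReal (Real.exp ((‖δ‖ * (σ * (-q)) - ‖δ‖ ^ 2 / 2) / σ ^ 2))
    with hc_def
  have hH1 : ∀ z ∈ H, c ≤ gratio σ δ z := by
    intro z hz
    have hz' : σ * (-q) ≤ (inner ℝ u z : ℝ) := hz
    rw [hc_def]
    unfold gratio
    apply ENNReal.ofReal_le_ofReal
    apply Real.exp_le_exp.mpr
    rw [hinner_delta z]
    have hmul := mul_le_mul_of_nonneg_left hz' hδnorm.le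
    gcongr <;> first | positivity | linarith
  have hH2 : ∀ z ∉ H, gratio σ δ z ≤ c := by
    intro z hz
    have hz' : (inner ℝ u z : ℝ) < σ * (-q) := by
      simpa [hH_def, Set.mem_preimage, Set.mem_Ici, not_le] using hz
    rw [hc_def]
    unfold gratio
    apply ENNReal.ofReal_le_ofReal
    apply Real.exp_le_exp.mpr
    rw [hinner_delta z]
    have hmul := mul_le_mul_of_nonneg_left hz'.le hδnorm.le
    gcongr <;> first | positivity | linarith
  have hAH : gaussianE d σ A = gaussianE d σ H := by rw [hp_val, hμH]
  have hNP : ν A ≤ ν H := by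
    rw [hν_dens]
    exact neyman_pearson (gaussianE d σ) (gratio σ δ) (gratio_measurable σ δ) hA hH c hH1 hH2 hAH
  have hpreH : (fun z : EuclideanSpace ℝ (Fin d) => z + δ) ⁻¹' H
      = (fun z : EuclideanSpace ℝ (Fin d) => (inner ℝ u z : ℝ)) ⁻¹'
          Set.Ici (σ * (-(q + ‖δ‖ / σ))) := by
    ext z
    simp only [Set.mem_preimage, hH_def, Set.mem_Ici]
    have hadd : (inner ℝ u (z + δ) : ℝ) = (inner ℝ u z : ℝ) + ‖δ‖ := by
      rw [inner_add_right, hud]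
    rw [hadd]
    have halg : σ * (-(q + ‖δ‖ / σ)) = σ * (-q) - ‖δ‖ := by
      field_simp
      ring
    rw [halg]
    constructor <;> intro <;> linarith
  have hνH : ν H = ENNReal.ofReal (stdGaussianCDF (q + ‖δ‖ / σ)) := by
    rw [hν_def, Measure.map_apply (measurable_add_const δ) hH, hpreH,
      ← Measure.map_apply hinner_meas measurableSet_Ici, hlaw0, gaussianV_Ici hσ,
      stdGaussianCDF_neg]
    congr 1
    ring
  have hfinal1 : smoothedConf f σ (x + δ) y ≤ stdGaussianCDF (q + ‖δ‖ / σ) := by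
    rw [hνA]
    calc (ν A).toReal ≤ (ν H).toReal :=
          ENNReal.toReal_mono (by rw [hνH]; exact ENNReal.ofReal_ne_top) hNP
      _ = stdGaussianCDF (q + ‖δ‖ / σ) := by
          rw [hνH, ENNReal.toReal_ofReal (stdGaussianCDF_nonneg _)]
  have hlt : q + ‖δ‖ / σ < stdGaussianCDFInv p₀ := by
    have : ‖δ‖ / σ < stdGaussianCDFInv p₀ - q := by
      rw [div_lt_iff₀ hσ]
      calc ‖δ‖ < σ * (stdGaussianCDFInv p₀ - q) := hδ
        _ = (stdGaussianCDFInv p₀ - q) * σ := mul_comm _ _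
    linarith
  calc smoothedConf f σ (x + δ) y ≤ stdGaussianCDF (q + ‖δ‖ / σ) := hfinal1
    _ < stdGaussianCDF (stdGaussianCDFInv p₀) := stdGaussianCDF_strictMono hlt
    _ = p₀ := hq0
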